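/- arXiv:2107.08595 — 2 statements merged into one kernel-verified Lean document; each statement's English description precedes it below -/
import Mathlib

section
/- Tridiagonal inverse for one-dimensional tensor Markov kernel matrices: let k(x,x') = p(x∧x')q(x∨x') with p, q positive on an interval and p/q strictly increasing, and let x_1 < ⋯ < x_n be design points with K_{ij} = k(x_i, x_j). Then K is invertible and K^{-1} is tridiagonal, with entries (K^{-1})_{i,i} = (p_{i+1}q_{i-1} − p_{i-1}q_{i+1}) / [(p_i q_{i-1} − p_{i-1}q_i)(p_{i+1}q_i − p_i q_{i+1})] and (K^{-1})_{i,i+1} = (K^{-1})_{i+1,i} = −1/(p_{i+1}q_i − p_i q_{i+1}), where p_i = p(x_i), q_i = q(x_i), with conventions p_0 = q_{n+1} = 0 and p_{n+1} = q_0 = 1. -/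
lemma tmki_core (n : ℕ) (pe qe : ℕ → ℝ) (hpe0 : pe 0 = 0)
    (hqen : qe (n + 1) = 0)
    (hd : ∀ k, k ≤ n → pe (k + 1) * qe k - pe k * qe (k + 1) ≠ 0)
    (i j : ℕ) (hi : i < n) (hj : j < n) :
    ∑ l ∈ Finset.range n,
      (pe (min i l + 1) * qe (max i l + 1)) *
        (if l = j then
            (pe (j + 2) * qe j - pe j * qe (j + 2)) /
              ((pe (j + 1) * qe j - pe j * qe (j + 1)) *
               (pe (j + 2) * qe (j + 1) - pe (j + 1) * qe (j + 2)))
          else if l + 1 = j ∨ j + 1 = l then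
            -1 / (pe (min l j + 2) * qe (min l j + 1) -
                  pe (min l j + 1) * qe (min l j + 2))
          else 0) = if i = j then 1 else 0 := by
  set f : ℕ → ℝ := fun l =>
      (pe (min i l + 1) * qe (max i l + 1)) *
        (if l = j then
            (pe (j + 2) * qe j - pe j * qe (j + 2)) /
              ((pe (j + 1) * qe j - pe j * qe (j + 1)) *
               (pe (j + 2) * qe (j + 1) - pe (j + 1) * qe (j + 2)))
          else if l + 1 = j ∨ j + 1 = l then
            -1 / (pe (min l j + 2) * qe (min l j + 1) -
                  pe (min l j + 1) * qe (min l j + 2))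
          else 0) with hf
  have hfn : f n = 0 := by
    have hmax : max i n = n := by omega
    simp only [hf, hmax, hqen, mul_zero, zero_mul]
  have h1 : ∑ l ∈ Finset.range n, f l = ∑ l ∈ Finset.range (n + 1), f l := by
    apply Finset.sum_subset (Finset.range_subset_range.2 (by omega))
    intro l hl hl'
    have : l = n := by simp at hl hl'; omega
    rw [this, hfn]
  have h2 : ∑ l ∈ Finset.Icc (j - 1) (j + 1), f l = ∑ l ∈ Finset.range (n + 1), f l := by
    apply Finset.sum_subset
    · intro l hl; simp at hl ⊢; omega
    · intro l hl hl'
      simp only [Finset.mem_Icc, not_and_or, not_le] at hl'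
      have h3 : l ≠ j := by omega
      have h4 : ¬ (l + 1 = j ∨ j + 1 = l) := by omega
      simp only [hf, if_neg h3, if_neg h4, mul_zero]
  rw [h1, ← h2]
  rcases Nat.eq_zero_or_pos j with rfl | hj1
  · -- j = 0
    have hIcc : Finset.Icc (0 - 1 : ℕ) (0 + 1) = {0, 1} := by
      ext a; simp [Finset.mem_Icc]; omega
    rw [hIcc, Finset.sum_pair (by omega)]
    have h0 := hd 0 (by omega)
    have hB := hd 1 (by omega)
    rw [hpe0] at h0
    norm_num at h0 hB
    have hB' : qe 1 * pe 2 - pe 1 * qe 2 ≠ 0 := by rw [mul_comm (qe 1)]; exact hB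
    obtain ⟨hpe1, hqe0⟩ := h0
    have e0 : f 0 = pe (min i 0 + 1) * qe (max i 0 + 1) *
        ((pe 2 * qe 0 - pe 0 * qe 2) /
          ((pe 1 * qe 0 - pe 0 * qe 1) * (pe 2 * qe 1 - pe 1 * qe 2))) := by
      simp only [hf]
      norm_num
    have e1 : f 1 = pe (min i 1 + 1) * qe (max i 1 + 1) *
        (-1 / (pe 2 * qe 1 - pe 1 * qe 2)) := by
      simp only [hf]
      norm_num
    rw [e0, e1]
    rcases Nat.eq_zero_or_pos i with rfl | hi1
    · rw [if_pos rfl]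
      simp only [hpe0, zero_mul, mul_zero, sub_zero, zero_sub]
      norm_num
      field_simp
      ring
    · rw [if_neg (by omega)]
      rw [show min i 0 = 0 from by omega, show max i 0 = i from by omega,
        show min i 1 = 1 from by omega, show max i 1 = i from by omega]
      simp only [hpe0, zero_mul, mul_zero, sub_zero, zero_sub]
      field_simp
      ring
  · -- j ≥ 1
    obtain ⟨m, rfl⟩ : ∃ m, j = m + 1 := ⟨j - 1, by omega⟩
    have hIcc : Finset.Icc (m + 1 - 1) (m + 1 + 1) = {m, m + 1, m + 2} := by
      ext a; simp [Finset.mem_Icc]; omega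
    rw [hIcc, Finset.sum_insert (by simp), Finset.sum_insert (by simp),
      Finset.sum_singleton]
    have hA : pe (m + 2) * qe (m + 1) - pe (m + 1) * qe (m + 2) ≠ 0 := hd (m + 1) (by omega)
    have hB : pe (m + 3) * qe (m + 2) - pe (m + 2) * qe (m + 3) ≠ 0 := hd (m + 2) (by omega)
    have hA' : qe (m + 1) * pe (m + 2) - pe (m + 1) * qe (m + 2) ≠ 0 := by rw [mul_comm (qe _)]; exact hA
    have hB' : qe (m + 2) * pe (m + 3) - pe (m + 2) * qe (m + 3) ≠ 0 := by rw [mul_comm (qe _)]; exact hB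
    have em : f m = pe (min i m + 1) * qe (max i m + 1) *
        (-1 / (pe (m + 2) * qe (m + 1) - pe (m + 1) * qe (m + 2))) := by
      simp only [hf]
      rw [show m ⊓ (m + 1) = m from min_eq_left (by omega)]
      split_ifs with h1 h2 <;> first | rfl | omega | simp at h2
    have em1 : f (m + 1) = pe (min i (m + 1) + 1) * qe (max i (m + 1) + 1) *
        ((pe (m + 3) * qe (m + 1) - pe (m + 1) * qe (m + 3)) /
          ((pe (m + 2) * qe (m + 1) - pe (m + 1) * qe (m + 2)) *
           (pe (m + 3) * qe (m + 2) - pe (m + 2) * qe (m + 3)))) := by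
      simp only [hf]
      split_ifs with h1 <;> first | rfl | omega
    have em2 : f (m + 2) = pe (min i (m + 2) + 1) * qe (max i (m + 2) + 1) *
        (-1 / (pe (m + 3) * qe (m + 2) - pe (m + 2) * qe (m + 3))) := by
      simp only [hf]
      rw [show (m + 2) ⊓ (m + 1) = m + 1 from min_eq_right (by omega)]
      split_ifs with h1 h2 <;> first | rfl | omega | simp at h2
    rw [em, em1, em2]
    rcases (by omega : i ≤ m ∨ i = m + 1 ∨ m + 2 ≤ i) with hc | rfl | hc
    · rw [if_neg (by omega)]
      rw [show min i m = i from by omega, show max i m = m from by omega,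
        show min i (m + 1) = i from by omega, show max i (m + 1) = m + 1 from by omega,
        show min i (m + 2) = i from by omega, show max i (m + 2) = m + 2 from by omega]
      field_simp
      ring
    · rw [if_pos rfl]
      rw [show min (m + 1) m = m from by omega, show max (m + 1) m = m + 1 from by omega,
        show min (m + 1) (m + 1) = m + 1 from by omega, show max (m + 1) (m + 1) = m + 1 from by omega,
        show min (m + 1) (m + 2) = m + 1 from by omega, show max (m + 1) (m + 2) = m + 2 from by omega]
      field_simp
      ring
    · rw [if_neg (by omega)]
      rw [show min i m = m from by omega, show max i m = i from by omega,
        show min i (m + 1) = m + 1 from by omega, show max i (m + 1) = i from by omega,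
        show min i (m + 2) = m + 2 from by omega, show max i (m + 2) = i from by omega]
      field_simp
      ring



/-- Tridiagonal inverse for one-dimensional tensor Markov kernel matrices:
for `k(x,x') = p(x∧x') q(x∨x')` with `p, q` positive and `p/q` strictly increasing along the
ordered design points `x_1 < ⋯ < x_n`, the kernel matrix `K` is invertible and its inverse is
the explicitly given tridiagonal matrix (with conventions `p_0 = q_{n+1} = 0`,
`p_{n+1} = q_0 = 1`). -/
theorem tensor_markov_tridiagonal_inverse (n : ℕ) (hn : 0 < n)
    (p q : ℝ → ℝ) (x : Fin n → ℝ)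
    (hx : ∀ i j : Fin n, i < j → x i < x j)
    (hp : ∀ i, 0 < p (x i)) (hq : ∀ i, 0 < q (x i))
    (hratio : ∀ i j : Fin n, i < j → p (x i) / q (x i) < p (x j) / q (x j))
    (K : Matrix (Fin n) (Fin n) ℝ)
    (hK : K = Matrix.of fun i j => p (x (min i j)) * q (x (max i j)))
    -- extended sequences with the conventions `p₀ = q_{n+1} = 0`, `p_{n+1} = q₀ = 1`
    (pe qe : ℕ → ℝ)
    (hpe : ∀ k : ℕ, pe k = if h : 1 ≤ k ∧ k ≤ n then p (x ⟨k - 1, by omega⟩)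
      else if k = 0 then 0 else 1)
    (hqe : ∀ k : ℕ, qe k = if h : 1 ≤ k ∧ k ≤ n then q (x ⟨k - 1, by omega⟩)
      else if k = 0 then 1 else 0)
    (M : Matrix (Fin n) (Fin n) ℝ)
    (hM : M = Matrix.of fun i j : Fin n =>
      if i = j then
        (pe (i.1 + 2) * qe i.1 - pe i.1 * qe (i.1 + 2)) /
          ((pe (i.1 + 1) * qe i.1 - pe i.1 * qe (i.1 + 1)) *
           (pe (i.1 + 2) * qe (i.1 + 1) - pe (i.1 + 1) * qe (i.1 + 2)))
      else if i.1 + 1 = j.1 ∨ j.1 + 1 = i.1 then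
        -1 / (pe (min i.1 j.1 + 2) * qe (min i.1 j.1 + 1) -
              pe (min i.1 j.1 + 1) * qe (min i.1 j.1 + 2))
      else 0) :
    IsUnit K.det ∧ K⁻¹ = M := by
  have hpe' : ∀ k : ℕ, 1 ≤ k → (h2 : k ≤ n) → pe k = p (x ⟨k - 1, by omega⟩) := by
    intro k h1 h2
    rw [hpe k, dif_pos ⟨h1, h2⟩]
  have hqe' : ∀ k : ℕ, 1 ≤ k → (h2 : k ≤ n) → qe k = q (x ⟨k - 1, by omega⟩) := by
    intro k h1 h2
    rw [hqe k, dif_pos ⟨h1, h2⟩]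
  have hpe0 : pe 0 = 0 := by rw [hpe 0]; norm_num
  have hqe0 : qe 0 = 1 := by rw [hqe 0]; norm_num
  have hpen : pe (n + 1) = 1 := by rw [hpe (n + 1)]; rw [dif_neg (by omega)]; norm_num
  have hqen : qe (n + 1) = 0 := by rw [hqe (n + 1)]; rw [dif_neg (by omega)]; norm_num
  have hd : ∀ k, k ≤ n → pe (k + 1) * qe k - pe k * qe (k + 1) ≠ 0 := by
    intro k hk
    rcases Nat.eq_zero_or_pos k with rfl | hk1
    · rw [hpe' 1 (by omega) (by omega), hpe0, hqe0]
      simpa using (hp _).ne'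
    · rcases eq_or_lt_of_le hk with rfl | hkn
      · rw [hpen, hqen, hqe' k (by omega) (by omega)]
        simpa using (hq _).ne'
      · rw [hpe' (k + 1) (by omega) (by omega), hqe' k (by omega) (by omega),
          hpe' k (by omega) (by omega), hqe' (k + 1) (by omega) (by omega)]
        simp only [Nat.add_sub_cancel]
        have hlt := hratio ⟨k - 1, by omega⟩ ⟨k, by omega⟩ (by simp [Fin.lt_def]; omega)
        have h2 := (div_lt_div_iff₀ (hq ⟨k - 1, by omega⟩) (hq ⟨k, by omega⟩)).mp hlt
        nlinarith [h2]
  have key : K * M = 1 := by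
    ext i j
    rw [Matrix.mul_apply, Matrix.one_apply]
    have hKe : ∀ a b : Fin n, K a b = pe (min a.1 b.1 + 1) * qe (max a.1 b.1 + 1) := by
      intro a b
      rw [hK, hpe' (min a.1 b.1 + 1) (by omega) (by have := a.2; have := b.2; omega),
        hqe' (max a.1 b.1 + 1) (by omega) (by have := a.2; have := b.2; omega)]
      simp only [Matrix.of_apply, Nat.add_sub_cancel]
      congr 2
    have core := tmki_core n pe qe hpe0 hqen hd i.1 j.1 i.2 j.2
    rw [← Fin.sum_univ_eq_sum_range] at core
    rw [show (if i = j then (1:ℝ) else 0) = if i.1 = j.1 then 1 else 0 from by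
      simp [Fin.ext_iff], ← core]
    apply Finset.sum_congr rfl
    intro l _
    rw [hKe i l, hM]
    simp only [Matrix.of_apply]
    congr 1
    by_cases h1 : l = j
    · subst h1
      rw [if_pos rfl, if_pos rfl]
    · rw [if_neg h1, if_neg (fun h => h1 (Fin.ext h))]
  exact ⟨Matrix.isUnit_det_of_right_inverse key, Matrix.inv_eq_right_inv key⟩
end

section
/- Lower bound for full-grid optimization of H¹ functions in one dimension: for each level τ ≥ 1, define the hat function f_τ(x) = 2^{-(τ+1)/2}·max{0, 1 − |x − 0.5 + 2^{-τ-1}|/2^{-τ-1}} on (0,1). Then f_τ vanishes at every grid point i·2^{-τ} (1 ≤ i ≤ 2^τ − 1), its maximum over (0,1) equals 2^{-(τ+1)/2}, and the L² norm of its weak derivative satisfies ‖f_τ'‖_2² = 2. -/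
open MeasureTheory Set

lemma auxderiv {f g : ℝ → ℝ} {U : Set ℝ} (hU : IsOpen U) {x d : ℝ} (hx : x ∈ U)
    (hfg : ∀ y ∈ U, f y = g y) (hg : HasDerivAt g d x) : HasDerivAt f d x :=
  hg.congr_of_eventuallyEq (Filter.eventually_of_mem (hU.mem_nhds hx) hfg)

/-- The hat function `f_τ(x) = 2^{-(τ+1)/2} max{0, 1 − |x − 0.5 + 2^{-τ-1}|/2^{-τ-1}}`
vanishes at every full-grid point `i·2^{-τ}`, attains maximum `2^{-(τ+1)/2}` over `(0,1)`,
and its weak derivative satisfies `‖f_τ'‖₂² = 2`. -/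
theorem full_grid_lower_bound_hat_function (τ : ℕ) (hτ : 1 ≤ τ)
    (f : ℝ → ℝ)
    (hf : f = fun x : ℝ =>
      Real.sqrt (((2 : ℝ) ^ (τ + 1))⁻¹) *
        max 0 (1 - |x - 0.5 + ((2 : ℝ) ^ (τ + 1))⁻¹| / ((2 : ℝ) ^ (τ + 1))⁻¹)) :
    (∀ i : ℕ, 1 ≤ i → i ≤ 2 ^ τ - 1 → f ((i : ℝ) / 2 ^ τ) = 0) ∧
    ((∀ x ∈ Ioo (0 : ℝ) 1, f x ≤ Real.sqrt (((2 : ℝ) ^ (τ + 1))⁻¹)) ∧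
      f (0.5 - ((2 : ℝ) ^ (τ + 1))⁻¹) = Real.sqrt (((2 : ℝ) ^ (τ + 1))⁻¹)) ∧
    (∃ f' : ℝ → ℝ,
      (∀ᵐ x ∂(volume.restrict (Ioo (0 : ℝ) 1)), HasDerivAt f (f' x) x) ∧
      ∫ x in Ioo (0 : ℝ) 1, (f' x) ^ 2 = 2) := by
  refine ⟨?_, ⟨?_, ?_⟩, ?_⟩
  · -- vanishes on grid
    intro i hi1 hi2
    set h : ℝ := ((2:ℝ)^(τ+1))⁻¹ with hh
    have hpos : 0 < h := by positivity
    have key : (i:ℝ)/2^τ - 0.5 + h = (2*(i:ℝ) - 2^τ + 1) * h := by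
      rw [hh]
      have : (2:ℝ)^(τ+1) = 2 * 2^τ := by ring
      rw [this]
      field_simp
      ring
    have hm : (1:ℝ) ≤ |2*(i:ℝ) - 2^τ + 1| := by
      have hodd : Odd (2*(i:ℤ) - 2^τ + 1) := by
        refine ⟨i - 2^(τ-1), ?_⟩
        have : (2:ℤ)^τ = 2 * 2^(τ-1) := by
          conv_lhs => rw [show τ = (τ-1)+1 from (Nat.succ_pred_eq_of_pos hτ).symm]
          ring
        rw [this]; ring
      have hne : (2*(i:ℤ) - 2^τ + 1) ≠ 0 := by
        intro h0; rw [h0] at hodd; exact (Int.not_odd_iff_even.mpr Even.zero) hodd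
      have := Int.one_le_abs hne
      calc (1:ℝ) ≤ |((2*(i:ℤ) - 2^τ + 1 : ℤ) : ℝ)| := by
              rw [← Int.cast_abs]; exact_mod_cast this
        _ = |2*(i:ℝ) - 2^τ + 1| := by push_cast; ring_nf
    have habs : h ≤ |(i:ℝ)/2^τ - 0.5 + h| := by
      rw [key, abs_mul, abs_of_pos hpos]
      nlinarith [abs_nonneg (2*(i:ℝ) - 2^τ + 1)]
    have hle : 1 - |(i:ℝ)/2^τ - 0.5 + h| / h ≤ 0 := by
      have : 1 ≤ |(i:ℝ)/2^τ - 0.5 + h| / h := (one_le_div hpos).mpr habs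
      linarith
    rw [hf]
    simp only
    rw [max_eq_left hle, mul_zero]
  · -- bounded by peak
    intro x hx
    set h : ℝ := ((2:ℝ)^(τ+1))⁻¹ with hh
    have hpos : 0 < h := by positivity
    rw [hf]
    simp only
    have hmax : max 0 (1 - |x - 0.5 + h| / h) ≤ 1 := by
      apply max_le zero_le_one
      have h1 := abs_nonneg (x - 0.5 + h)
      have h2 := div_nonneg h1 hpos.le
      linarith
    calc Real.sqrt h * max 0 (1 - |x - 0.5 + h| / h)
        ≤ Real.sqrt h * 1 := mul_le_mul_of_nonneg_left hmax (Real.sqrt_nonneg _)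
      _ = Real.sqrt h := mul_one _
  · -- attains peak
    set h : ℝ := ((2:ℝ)^(τ+1))⁻¹ with hh
    rw [hf]
    simp only
    have : (0.5:ℝ) - h - 0.5 + h = 0 := by ring
    rw [this, abs_zero, zero_div, sub_zero, max_eq_right zero_le_one, mul_one]
  · -- weak derivative
      set h : ℝ := ((2:ℝ)^(τ+1))⁻¹ with hh
      have hpos : 0 < h := by positivity
      set c : ℝ := Real.sqrt h with hcc
      have hc2 : c^2 = h := Real.sq_sqrt hpos.le
      set a : ℝ := 0.5 - 2*h with ha
      set b : ℝ := 0.5 - h with hb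
      have h4 : h ≤ 1/4 := by
        rw [hh, inv_le_comm₀ (by positivity) (by norm_num)]
        calc (1/4 : ℝ)⁻¹ = 2^2 := by norm_num
          _ ≤ 2^(τ+1) := by apply pow_le_pow_right₀ (by norm_num); omega
      have hab : a < b := by simp [ha, hb]; linarith
      have hb5 : b < 0.5 := by simp [hb]; linarith
      have ha0 : 0 ≤ a := by
        simp [ha]; linarith [h4]
      refine ⟨fun x => if x ∈ Ioo a b then c/h else if x ∈ Ioo b 0.5 then -(c/h) else 0, ?_, ?_⟩
      · -- a.e. derivative
        apply ae_restrict_of_ae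
        have hS : ∀ᵐ x : ℝ ∂volume, x ∉ ({a, b, 0.5} : Set ℝ) := by
          rw [ae_iff]
          simp only [not_not]
          refine measure_mono_null (fun x hx => hx) ?_
          exact (((Set.finite_singleton (0.5:ℝ)).insert b).insert a).measure_zero _
        filter_upwards [hS] with x hx
        simp only [mem_insert_iff, mem_singleton_iff, not_or] at hx
        obtain ⟨hxa, hxb, hx5⟩ := hx
        rcases lt_trichotomy x a with hlt | heq | hgt
        · -- f = 0 near x
          have hd : HasDerivAt f 0 x := by
            apply auxderiv isOpen_Iio hlt _ (hasDerivAt_const x 0)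
            intro y hy
            simp only [mem_Iio, ha] at hy
            rw [hf]
            have h1 : y - 0.5 + h < -h := by linarith
            have : 1 - |y - 0.5 + h| / h ≤ 0 := by
              rw [abs_of_neg (by linarith)]
              rw [sub_nonpos, le_div_iff₀ hpos]
              linarith
            simp only
            rw [max_eq_left this, mul_zero]
          convert hd using 1
          rw [if_neg, if_neg] <;> simp only [mem_Ioo, not_and, not_lt] <;> intro h' <;> linarith
        · exact absurd heq hxa
        rcases lt_trichotomy x b with hlt | heq | hgt2
        · -- slope c/h
          have hd : HasDerivAt f (c/h * 1) x := by
            apply auxderiv isOpen_Ioo (show x ∈ Ioo a b from ⟨hgt, hlt⟩)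
              (g := fun y => c/h * (y - a))
            · intro y hy
              simp only [mem_Ioo, ha, hb] at hy
              rw [hf]
              have h1 : y - 0.5 + h < 0 := by linarith
              have h2 : 0 ≤ 1 - |y - 0.5 + h| / h := by
                rw [abs_of_neg h1, sub_nonneg, div_le_one hpos]; linarith
              simp only
              rw [max_eq_right h2, abs_of_neg h1, ha]
              have key : 1 - -(y - 0.5 + h)/h = (y - (0.5 - 2*h))/h := by
                rw [eq_div_iff hpos.ne', sub_mul, one_mul, div_mul_cancel₀ _ hpos.ne']; ring
              rw [key, div_mul_eq_mul_div, mul_div_assoc]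
            · exact ((hasDerivAt_id x).sub_const a).const_mul (c/h)
          convert hd using 1
          rw [if_pos ⟨hgt, hlt⟩, mul_one]
        · exact absurd heq hxb
        rcases lt_trichotomy x 0.5 with hlt | heq | hgt3
        · -- slope -(c/h)
          have hd : HasDerivAt f (c/h * (-1)) x := by
            apply auxderiv isOpen_Ioo (show x ∈ Ioo b 0.5 from ⟨hgt2, hlt⟩)
              (g := fun y => c/h * (0.5 - y))
            · intro y hy
              simp only [mem_Ioo, hb] at hy
              rw [hf]
              have h1 : 0 ≤ y - 0.5 + h := by linarith
              have h2 : 0 ≤ 1 - |y - 0.5 + h| / h := by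
                rw [abs_of_nonneg h1, sub_nonneg, div_le_one hpos]; linarith
              simp only
              rw [max_eq_right h2, abs_of_nonneg h1]
              have key : 1 - (y - 0.5 + h)/h = (0.5 - y)/h := by
                rw [eq_div_iff hpos.ne', sub_mul, one_mul, div_mul_cancel₀ _ hpos.ne']; ring
              rw [key, div_mul_eq_mul_div, mul_div_assoc]
            · exact ((hasDerivAt_id x).const_sub 0.5).const_mul (c/h)
          convert hd using 1
          have hnot : x ∉ Ioo a b := by
            simp only [mem_Ioo, not_and, not_lt]; intro h'; linarith
          rw [if_neg hnot, if_pos ⟨hgt2, hlt⟩]; ring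
        · exact absurd heq hx5
        · -- f = 0 near x, right side
          have hd : HasDerivAt f 0 x := by
            apply auxderiv isOpen_Ioi hgt3 _ (hasDerivAt_const x 0)
            intro y hy
            simp only [mem_Ioi] at hy
            rw [hf]
            have h1 : h < y - 0.5 + h := by linarith
            have : 1 - |y - 0.5 + h| / h ≤ 0 := by
              rw [abs_of_pos (by linarith), sub_nonpos, le_div_iff₀ hpos]
              linarith
            simp only
            rw [max_eq_left this, mul_zero]
          convert hd using 1
          rw [if_neg, if_neg] <;> simp only [mem_Ioo, not_and, not_lt] <;> intro h' <;> linarith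
      · -- integral
        have hsq : ∀ x : ℝ, ((if x ∈ Ioo a b then c/h else if x ∈ Ioo b 0.5 then -(c/h) else 0))^2
            = (Ioo a b).indicator (fun _ => 1/h) x + (Ioo b 0.5).indicator (fun _ => 1/h) x := by
          intro x
          by_cases h1 : x ∈ Ioo a b
          · have h2 : x ∉ Ioo b 0.5 := by
              simp only [mem_Ioo] at h1 ⊢; push_neg; intro h'; exfalso; exact absurd h1.2 (not_lt.mpr h'.le)
            rw [if_pos h1, indicator_of_mem h1, indicator_of_notMem h2, add_zero, div_pow, hc2]
            field_simp
          · by_cases h2 : x ∈ Ioo b 0.5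
            · rw [if_neg h1, if_pos h2, indicator_of_notMem h1, indicator_of_mem h2, zero_add,
                neg_sq, div_pow, hc2]
              field_simp
            · rw [if_neg h1, if_neg h2, indicator_of_notMem h1, indicator_of_notMem h2]
              simp
        simp_rw [hsq]
        have hint1 : Integrable ((Ioo a b).indicator (fun _ => 1/h)) (volume.restrict (Ioo (0:ℝ) 1)) := by
          apply Integrable.indicator _ measurableSet_Ioo
          rw [integrable_const_iff]
          right
          exact ⟨by rw [Measure.restrict_apply_univ]
                    exact measure_Ioo_lt_top⟩
        have hint2 : Integrable ((Ioo b 0.5).indicator (fun _ => 1/h)) (volume.restrict (Ioo (0:ℝ) 1)) := by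
          apply Integrable.indicator _ measurableSet_Ioo
          rw [integrable_const_iff]
          right
          exact ⟨by rw [Measure.restrict_apply_univ]
                    exact measure_Ioo_lt_top⟩
        rw [integral_add hint1 hint2, integral_indicator measurableSet_Ioo,
          integral_indicator measurableSet_Ioo, Measure.restrict_restrict measurableSet_Ioo,
          Measure.restrict_restrict measurableSet_Ioo]
        have e1 : Ioo a b ∩ Ioo (0:ℝ) 1 = Ioo a b := by
          rw [inter_eq_left]
          intro y hy; simp only [mem_Ioo] at hy ⊢
          have hb1 : b < 1 := by rw [hb]; linarith
          exact ⟨by linarith [hy.1], by linarith [hy.2]⟩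
        have e2 : Ioo b 0.5 ∩ Ioo (0:ℝ) 1 = Ioo b 0.5 := by
          rw [inter_eq_left]
          intro y hy; simp only [mem_Ioo] at hy ⊢
          have hb0 : (0:ℝ) < b := by rw [hb]; linarith
          exact ⟨by linarith [hy.1], by linarith [hy.2]⟩
        rw [e1, e2, setIntegral_const, setIntegral_const, Real.volume_real_Ioo_of_le (by linarith),
          Real.volume_real_Ioo_of_le (by linarith)]
        have : b - a = h := by rw [ha, hb]; ring
        rw [this]
        have : (0.5:ℝ) - b = h := by rw [hb]; ring
        rw [this]
        field_simp
        norm_num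
end
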